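/- If β_m = D̃(1 + e_m) with D̃ ≠ 0 independent of m and |e_m| ≤ C·Δx for small Δx, and d_m > 0 with Σd_m = 1, then the WENO-JS weights ω_m = (d_m/β_m²) / Σ_i (d_i/β_i²) satisfy ω_m = d_m + O(Δx), i.e. |ω_m − d_m| ≤ C'·Δx for small Δx. -/

import Mathlib

set_option maxHeartbeats 1000000

lemma weno_aux (ε d0 d1 d2 u0 u1 u2 : ℝ)
    (hε : 0 ≤ ε)
    (hd0 : 0 < d0) (hd1 : 0 < d1) (hd2 : 0 < d2) (hsum : d0 + d1 + d2 = 1)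
    (h0l : 1/4 ≤ u0) (h0r : u0 ≤ 9/4)
    (h1l : 1/4 ≤ u1) (h1r : u1 ≤ 9/4)
    (h2l : 1/4 ≤ u2) (h2r : u2 ≤ 9/4)
    (h01 : |u0 - u1| ≤ 6*ε) (h02 : |u0 - u2| ≤ 6*ε) :
    |(d0/u0)/(d0/u0 + d1/u1 + d2/u2) - d0| ≤ 216*ε := by
  have hu0 : 0 < u0 := by linarith
  have hu1 : 0 < u1 := by linarith
  have hu2 : 0 < u2 := by linarith
  obtain ⟨S, hSdef⟩ : ∃ S, S = d0/u0 + d1/u1 + d2/u2 := ⟨_, rfl⟩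
  have hS0 : 4/9 * d0 ≤ d0/u0 := by rw [le_div_iff₀ hu0]; nlinarith
  have hS1 : 4/9 * d1 ≤ d1/u1 := by rw [le_div_iff₀ hu1]; nlinarith
  have hS2 : 4/9 * d2 ≤ d2/u2 := by rw [le_div_iff₀ hu2]; nlinarith
  have hS : 4/9 ≤ S := by rw [hSdef]; linarith
  have hSpos : 0 < S := lt_of_lt_of_le (by norm_num) hS
  have hSne : S ≠ 0 := by positivity
  have key : (d0/u0)/S - d0 = (d0/u0 - d0*S)/S := by
    field_simp
  rw [← hSdef, key, abs_div, abs_of_pos hSpos]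
  have hd0' : d0 = 1 - d1 - d2 := by linarith
  have expand : d0/u0 - d0*S =
      d0*(d1*((u1-u0)/(u0*u1)) + d2*((u2-u0)/(u0*u2))) := by
    rw [hSdef, hd0']
    field_simp
    ring
  have hm01 : (1:ℝ)/16 ≤ u0*u1 := by nlinarith
  have hm02 : (1:ℝ)/16 ≤ u0*u2 := by nlinarith
  have b1 : |(u1-u0)/(u0*u1)| ≤ 96*ε := by
    rw [abs_div, abs_of_pos (mul_pos hu0 hu1), div_le_iff₀ (mul_pos hu0 hu1)]
    have h := abs_sub_comm u1 u0
    have hint := mul_le_mul_of_nonneg_left hm01 (by positivity : (0:ℝ) ≤ 96*ε)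
    linarith
  have b2 : |(u2-u0)/(u0*u2)| ≤ 96*ε := by
    rw [abs_div, abs_of_pos (mul_pos hu0 hu2), div_le_iff₀ (mul_pos hu0 hu2)]
    have h := abs_sub_comm u2 u0
    have hint := mul_le_mul_of_nonneg_left hm02 (by positivity : (0:ℝ) ≤ 96*ε)
    linarith
  have hN : |d0/u0 - d0*S| ≤ 96*ε := by
    rw [expand, abs_mul, abs_of_pos hd0]
    have htri : |d1*((u1-u0)/(u0*u1)) + d2*((u2-u0)/(u0*u2))|
        ≤ d1*|(u1-u0)/(u0*u1)| + d2*|(u2-u0)/(u0*u2)| := by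
      calc _ ≤ |d1*((u1-u0)/(u0*u1))| + |d2*((u2-u0)/(u0*u2))| := abs_add_le _ _
        _ = d1*|(u1-u0)/(u0*u1)| + d2*|(u2-u0)/(u0*u2)| := by
            rw [abs_mul, abs_mul, abs_of_pos hd1, abs_of_pos hd2]
    have e1 : d1*|(u1-u0)/(u0*u1)| ≤ d1*(96*ε) :=
      mul_le_mul_of_nonneg_left b1 hd1.le
    have e2 : d2*|(u2-u0)/(u0*u2)| ≤ d2*(96*ε) :=
      mul_le_mul_of_nonneg_left b2 hd2.le
    have habs : |d1*((u1-u0)/(u0*u1)) + d2*((u2-u0)/(u0*u2))| ≤ (d1+d2)*(96*ε) := by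
      linarith
    calc d0 * |d1*((u1-u0)/(u0*u1)) + d2*((u2-u0)/(u0*u2))|
        ≤ d0 * ((d1+d2)*(96*ε)) := mul_le_mul_of_nonneg_left habs hd0.le
      _ ≤ 96*ε := by
          have hdd : d0*(d1+d2) ≤ 1 := by nlinarith
          have hint := mul_le_mul_of_nonneg_right hdd (by positivity : (0:ℝ) ≤ 96*ε)
          linarith
  rw [div_le_iff₀ hSpos]
  have hint := mul_le_mul_of_nonneg_left hS (by positivity : (0:ℝ) ≤ 216*ε)
  linarith

theorem wenoDS_JS_weights_first_order (D C : ℝ) (hD : D ≠ 0) (hC : 0 ≤ C)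
    (d : Fin 3 → ℝ) (hd : ∀ m, 0 < d m) (hdsum : d 0 + d 1 + d 2 = 1) :
    ∃ C' > (0 : ℝ), ∃ δ > (0 : ℝ), ∀ Δx : ℝ, 0 < Δx → Δx < δ →
      ∀ e β : Fin 3 → ℝ, (∀ m, |e m| ≤ C * Δx) → (∀ m, β m = D * (1 + e m)) →
        ∀ m : Fin 3,
          |(d m / (β m) ^ 2) / (d 0 / (β 0) ^ 2 + d 1 / (β 1) ^ 2 + d 2 / (β 2) ^ 2) - d m|
            ≤ C' * Δx := by
  refine ⟨216*C + 1, by positivity, 1/(2*(C+1)), by positivity, ?_⟩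
  intro Δx hΔx hΔδ e β he hβ m
  set ε := C * Δx with hεdef
  have hε : 0 ≤ ε := by positivity
  have hεhalf : ε ≤ 1/2 := by
    rw [hεdef]
    have h1 : C * Δx ≤ C * (1/(2*(C+1))) :=
      mul_le_mul_of_nonneg_left hΔδ.le hC
    have h2 : C * (1/(2*(C+1))) ≤ 1/2 := by
      rw [mul_one_div, div_le_div_iff₀ (by positivity) (by norm_num : (0:ℝ) < 2)]
      nlinarith
    linarith
  -- bounds on u i := (1 + e i)^2
  have heb : ∀ i, -(1/2 : ℝ) ≤ e i ∧ e i ≤ 1/2 := by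
    intro i
    have := abs_le.mp (le_trans (he i) hεhalf)
    exact this
  have hul : ∀ i, 1/4 ≤ (1 + e i)^2 := by
    intro i; obtain ⟨h1, h2⟩ := heb i; nlinarith
  have hur : ∀ i, (1 + e i)^2 ≤ 9/4 := by
    intro i; obtain ⟨h1, h2⟩ := heb i; nlinarith
  have hudiff : ∀ i j, |(1 + e i)^2 - (1 + e j)^2| ≤ 6*ε := by
    intro i j
    obtain ⟨hi1, hi2⟩ := heb i
    obtain ⟨hj1, hj2⟩ := heb j
    have hei := abs_le.mp (he i)
    have hej := abs_le.mp (he j)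
    rw [abs_le]
    constructor <;> nlinarith
  -- rewrite β terms
  have hune : ∀ i, (1 + e i) ≠ 0 := by
    intro i; obtain ⟨h1, h2⟩ := heb i; intro hcon; linarith
  have hrw : ∀ i, d i / (β i)^2 = (d i / (1 + e i)^2) / D^2 := by
    intro i
    rw [hβ i]
    rw [mul_pow, div_div]
    ring_nf
  have hD2 : (D:ℝ)^2 ≠ 0 := pow_ne_zero 2 hD
  have hkey : (d m / (β m) ^ 2) / (d 0 / (β 0) ^ 2 + d 1 / (β 1) ^ 2 + d 2 / (β 2) ^ 2)
      = (d m / (1 + e m)^2) /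
        (d 0 / (1 + e 0)^2 + d 1 / (1 + e 1)^2 + d 2 / (1 + e 2)^2) := by
    rw [hrw m, hrw 0, hrw 1, hrw 2]
    rw [← add_div, ← add_div, div_div_div_cancel_right₀ hD2]
  rw [hkey]
  have hfin : ∀ i : Fin 3, i = 0 ∨ i = 1 ∨ i = 2 := by decide
  have main : |(d m / (1 + e m)^2) /
        (d 0 / (1 + e 0)^2 + d 1 / (1 + e 1)^2 + d 2 / (1 + e 2)^2) - d m| ≤ 216*ε := by
    rcases hfin m with hm | hm | hm <;> subst hm
    · exact weno_aux ε (d 0) (d 1) (d 2) ((1+e 0)^2) ((1+e 1)^2) ((1+e 2)^2)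
        hε (hd 0) (hd 1) (hd 2) hdsum (hul 0) (hur 0) (hul 1) (hur 1)
        (hul 2) (hur 2) (hudiff 0 1) (hudiff 0 2)
    · have h := weno_aux ε (d 1) (d 0) (d 2) ((1+e 1)^2) ((1+e 0)^2) ((1+e 2)^2)
        hε (hd 1) (hd 0) (hd 2) (by linarith) (hul 1) (hur 1) (hul 0) (hur 0)
        (hul 2) (hur 2) (hudiff 1 0) (hudiff 1 2)
      rw [show d 1/(1+e 1)^2 + d 0/(1+e 0)^2 + d 2/(1+e 2)^2
          = d 0/(1+e 0)^2 + d 1/(1+e 1)^2 + d 2/(1+e 2)^2 from by ring] at h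
      exact h
    · have h := weno_aux ε (d 2) (d 0) (d 1) ((1+e 2)^2) ((1+e 0)^2) ((1+e 1)^2)
        hε (hd 2) (hd 0) (hd 1) (by linarith) (hul 2) (hur 2) (hul 0) (hur 0)
        (hul 1) (hur 1) (hudiff 2 0) (hudiff 2 1)
      rw [show d 2/(1+e 2)^2 + d 0/(1+e 0)^2 + d 1/(1+e 1)^2
          = d 0/(1+e 0)^2 + d 1/(1+e 1)^2 + d 2/(1+e 2)^2 from by ring] at h
      exact h
  calc _ ≤ 216*ε := main
    _ = 216*C*Δx := by rw [hεdef]; ring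
    _ ≤ (216*C + 1)*Δx := by nlinarith
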